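/- Let M be the local covariance map on 𝕊² defined by M(X) = A X Aᵀ + η²λ² X_{11} Q, where A = [[1−ηλ, −β],[ηλ, β]], Q = [[1,−1],[−1,1]], ηλ > 0, and β ∈ [0,1). For any c > 0, if the spectral radius satisfies ρ(cM) ≥ 1, then for every α > 0 there exists no positive semidefinite W ∈ 𝕊² such that (Id − cM)(W) − αQ is positive semidefinite. -/

import Mathlib

open Matrix

noncomputable instance : NormedAddCommGroup (Matrix (Fin 2) (Fin 2) ℝ) :=
  inferInstanceAs (NormedAddCommGroup (Fin 2 → Fin 2 → ℝ))

noncomputable instance : NormedSpace ℝ (Matrix (Fin 2) (Fin 2) ℝ) :=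
  inferInstanceAs (NormedSpace ℝ (Fin 2 → Fin 2 → ℝ))

/-- The space `𝕊²` of 2×2 real symmetric matrices, as a submodule of the 2×2 matrices. -/
def Sym2Mat : Submodule ℝ (Matrix (Fin 2) (Fin 2) ℝ) where
  carrier := {X | X.IsSymm}
  add_mem' := fun hA hB => hA.add hB
  zero_mem' := Matrix.isSymm_zero
  smul_mem' := fun c _ hX => hX.smul c

/-- The matrix `A = [[1−ηλ, −β],[ηλ, β]]`. -/
def Amat (η β l : ℝ) : Matrix (Fin 2) (Fin 2) ℝ := !![1 - η * l, -β; η * l, β]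

/-- The matrix `Q = [[1,−1],[−1,1]]`. -/
def Qmat : Matrix (Fin 2) (Fin 2) ℝ := !![1, -1; -1, 1]

/-! ### Auxiliary lemmas about quadratic forms of 2×2 matrices -/

/-- Nonnegativity of the quadratic form of a 2×2 real matrix. -/
def qf (Z : Matrix (Fin 2) (Fin 2) ℝ) : Prop :=
  ∀ x y : ℝ, 0 ≤ Z 0 0 * x^2 + (Z 0 1 + Z 1 0) * x * y + Z 1 1 * y^2

lemma qf_add {Y Z : Matrix (Fin 2) (Fin 2) ℝ} (hY : qf Y) (hZ : qf Z) : qf (Y + Z) := by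
  intro x y; have h1 := hY x y; have h2 := hZ x y
  simp only [Matrix.add_apply]; nlinarith

lemma qf_smul {Z : Matrix (Fin 2) (Fin 2) ℝ} (hZ : qf Z) {t : ℝ} (ht : 0 ≤ t) : qf (t • Z) := by
  intro x y; have h := hZ x y
  simp only [Matrix.smul_apply, smul_eq_mul]; nlinarith

lemma qf00 {Z : Matrix (Fin 2) (Fin 2) ℝ} (hZ : qf Z) : 0 ≤ Z 0 0 := by
  have := hZ 1 0; simpa using this

lemma qf11 {Z : Matrix (Fin 2) (Fin 2) ℝ} (hZ : qf Z) : 0 ≤ Z 1 1 := by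
  have := hZ 0 1; simpa using this

lemma qf_of_psd {Z : Matrix (Fin 2) (Fin 2) ℝ} (hZ : Z.PosSemidef) : qf Z := by
  intro x y
  have h := hZ.dotProduct_mulVec_nonneg ![x, y]
  simp only [dotProduct, Matrix.mulVec, Fin.sum_univ_two, star_trivial, Matrix.cons_val_zero,
    Matrix.cons_val_one, Matrix.head_cons, Pi.star_apply] at h
  nlinarith [h]

lemma qf_Q : qf Qmat := by
  intro x y; simp [Qmat]; nlinarith [sq_nonneg (x - y)]

lemma qf_conj (η β l : ℝ) {S : Matrix (Fin 2) (Fin 2) ℝ} (hs : qf S) :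
    qf (Amat η β l * S * (Amat η β l)ᵀ) := by
  intro x y
  have h := hs ((1 - η*l)*x + (η*l)*y) ((-β)*x + β*y)
  simp only [Amat, Matrix.mul_apply, Fin.sum_univ_two, Matrix.transpose_apply,
    Matrix.of_apply, Matrix.cons_val', Matrix.cons_val_zero, Matrix.cons_val_one,
    Matrix.head_cons, Matrix.empty_val', Matrix.cons_val_fin_one, Matrix.head_fin_const]
  nlinarith [h]

lemma Gfact (α c w0 δ D : ℝ) (hα : 0 < α) (hc : 0 < c)
    (hD : D = 2 + c*(w0^2+(1-w0)^2)) (hδ : δ = α*c/D) :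
    0 < δ ∧ qf (α•Qmat + (α*c) •
      !![w0*w0, w0*(1-w0); w0*(1-w0), (1-w0)*(1-w0)] - δ•(1:Matrix (Fin 2) (Fin 2) ℝ)) := by
  have hD0 : 0 < D := by rw [hD]; positivity
  have hδ0 : 0 < δ := by rw [hδ]; positivity
  set a : ℝ := α + α*c*(w0*w0) - δ with ha
  set b : ℝ := -α + α*c*(w0*(1-w0)) with hb
  set d : ℝ := α + α*c*((1-w0)*(1-w0)) - δ with hd
  have hdet : a*d - b*b = δ^2 := by
    rw [ha, hb, hd, hδ]; field_simp; rw [hD]; ring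
  have hsum : 0 ≤ a + d := by
    have h2 : a + d = (α*D*D - 2*α*c)/D := by
      rw [ha, hd, hδ, hD]; field_simp; ring
    rw [h2]
    apply div_nonneg _ hD0.le
    have hw : (1:ℝ)/2 ≤ w0^2 + (1-w0)^2 := by nlinarith [sq_nonneg (2*w0-1)]
    have hD2 : 2 + c/2 ≤ D := by
      rw [hD]; nlinarith [mul_le_mul_of_nonneg_left hw hc.le]
    have hsq : (2+c/2)^2 ≤ D^2 := by nlinarith [hD2, hc]
    nlinarith [mul_le_mul_of_nonneg_left hsq hα.le, sq_nonneg c, hα]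
  have ha0 : 0 < a := by
    rcases lt_or_ge 0 a with h | h
    · exact h
    · exfalso; nlinarith [sq_nonneg b, hδ0, mul_nonneg (neg_nonneg.2 h) hsum]
  refine ⟨hδ0, ?_⟩
  intro x y
  have key : 0 ≤ a*x^2 + 2*b*x*y + d*y^2 := by
    nlinarith [sq_nonneg (a*x + b*y), mul_nonneg (mul_nonneg (sq_nonneg δ) (sq_nonneg y)) ha0.le,
      sq_nonneg y, mul_pos hδ0 hδ0]
  simp only [Qmat, Matrix.add_apply, Matrix.sub_apply, Matrix.smul_apply, Matrix.one_apply,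
    Matrix.of_apply, Matrix.cons_val', Matrix.cons_val_zero, Matrix.cons_val_one,
    Matrix.head_cons, Matrix.empty_val', Matrix.cons_val_fin_one, Matrix.head_fin_const,
    smul_eq_mul]
  norm_num
  rw [← ha, ← hb, ← hd]; linarith [key]

lemma norm_le_of_qf {Y P : Matrix (Fin 2) (Fin 2) ℝ} (hsym : Y 1 0 = Y 0 1)
    (h1 : qf (P - Y)) (h2 : qf (P + Y)) : ‖Y‖ ≤ P 0 0 + P 1 1 := by
  have m1 := h1 1 0; have m2 := h2 1 0
  have m3 := h1 0 1; have m4 := h2 0 1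
  have m5 := h1 1 1; have m6 := h1 1 (-1)
  have m7 := h2 1 1; have m8 := h2 1 (-1)
  norm_num [Matrix.sub_apply, Matrix.add_apply] at m1 m2 m3 m4 m5 m6 m7 m8
  have hC : 0 ≤ P 0 0 + P 1 1 := by linarith
  refine (pi_norm_le_iff_of_nonneg hC).2 ?_
  intro i
  rw [pi_norm_le_iff_of_nonneg hC]
  intro j
  rw [Real.norm_eq_abs, abs_le]
  fin_cases i <;> fin_cases j <;> simp only [Fin.zero_eta, Fin.mk_one] <;> constructor <;>
    linarith [hsym, hC]

lemma entry_abs_le (X : Matrix (Fin 2) (Fin 2) ℝ) (i j : Fin 2) : |X i j| ≤ ‖X‖ := by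
  calc |X i j| = ‖X i j‖ := (Real.norm_eq_abs _).symm
  _ ≤ ‖X i‖ := norm_le_pi_norm (X i) j
  _ ≤ ‖X‖ := norm_le_pi_norm X i

lemma qf_two_norm {X : Matrix (Fin 2) (Fin 2) ℝ} :
    qf ((2*‖X‖) • (1 : Matrix (Fin 2) (Fin 2) ℝ) - X) := by
  intro x y
  have e00 := abs_le.1 (entry_abs_le X 0 0)
  have e01 := abs_le.1 (entry_abs_le X 0 1)
  have e10 := abs_le.1 (entry_abs_le X 1 0)
  have e11 := abs_le.1 (entry_abs_le X 1 1)
  simp only [Matrix.sub_apply, Matrix.smul_apply, Matrix.one_apply, smul_eq_mul]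
  norm_num
  nlinarith [sq_nonneg (x+y), sq_nonneg (x-y), e00.1, e00.2, e01.1, e01.2, e10.1, e10.2,
    e11.1, e11.2, sq_nonneg x, sq_nonneg y]

set_option maxHeartbeats 1000000 in
/-- **Scaled infeasibility for the local covariance map.**  Let `M` be the local covariance
map on `𝕊²`, `M(X) = A X Aᵀ + η²λ² X₁₁ Q`.  For any `c > 0`, if the spectral radius `ρ` of
`cM` (the limit of `‖(cM)ⁿ‖^{1/n}`) satisfies `ρ ≥ 1`, then for every `α > 0` there is no
positive semidefinite `W ∈ 𝕊²` with `(Id − cM)(W) − αQ` positive semidefinite. -/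
theorem local_cov_map_infeasibility (η l β : ℝ) (hη : 0 < η) (hl : 0 < l)
    (hβ : β ∈ Set.Ico (0 : ℝ) 1)
    (M : Sym2Mat →L[ℝ] Sym2Mat)
    (hM : ∀ X : Sym2Mat, ((M X : Matrix (Fin 2) (Fin 2) ℝ))
        = Amat η β l * (X : Matrix (Fin 2) (Fin 2) ℝ) * (Amat η β l)ᵀ
          + (η ^ 2 * l ^ 2 * (X : Matrix (Fin 2) (Fin 2) ℝ) 0 0) • Qmat)
    (c : ℝ) (hc : 0 < c) (ρ : ℝ)
    (hρ : Filter.Tendsto (fun n : ℕ => ‖(c • M) ^ n‖ ^ ((n : ℝ)⁻¹)) Filter.atTop (nhds ρ))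
    (hρ1 : 1 ≤ ρ) (α : ℝ) (hα : 0 < α) :
    ¬ ∃ W : Sym2Mat, ((W : Matrix (Fin 2) (Fin 2) ℝ)).PosSemidef ∧
        ((((1 - c • M) W : Sym2Mat) : Matrix (Fin 2) (Fin 2) ℝ) - α • Qmat).PosSemidef := by
  rintro ⟨W, hW, hZ0psd⟩
  set Z0 : Matrix (Fin 2) (Fin 2) ℝ :=
    (((1 - c • M) W : Sym2Mat) : Matrix (Fin 2) (Fin 2) ℝ) - α • Qmat with hZ0def
  have hqfZ0 : qf Z0 := qf_of_psd hZ0psd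
  have hqfW : qf (W : Matrix (Fin 2) (Fin 2) ℝ) := qf_of_psd hW
  -- `M` and `c • M` preserve the PSD cone
  have Mpres : ∀ S : Sym2Mat, qf (S : Matrix (Fin 2) (Fin 2) ℝ) →
      qf ((M S : Sym2Mat) : Matrix (Fin 2) (Fin 2) ℝ) := by
    intro S hS
    rw [hM S]
    exact qf_add (qf_conj η β l hS)
      (qf_smul qf_Q (mul_nonneg (by positivity) (qf00 hS)))
  have Npres : ∀ S : Sym2Mat, qf (S : Matrix (Fin 2) (Fin 2) ℝ) →
      qf (((c • M) S : Sym2Mat) : Matrix (Fin 2) (Fin 2) ℝ) := by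
    intro S hS
    have hap : ((c • M) S : Sym2Mat) = c • (M S) := rfl
    rw [hap]
    push_cast
    exact qf_smul (Mpres S hS) hc.le
  have NpowPres : ∀ (n : ℕ) (S : Sym2Mat), qf (S : Matrix (Fin 2) (Fin 2) ℝ) →
      qf ((((c • M) ^ n) S : Sym2Mat) : Matrix (Fin 2) (Fin 2) ℝ) := by
    intro n
    induction n with
    | zero => intro S hS; simpa using hS
    | succ n ih =>
      intro S hS
      rw [pow_succ', ContinuousLinearMap.mul_apply]
      exact Npres _ (ih S hS)
  -- the coercion of `(1 - c•M) W`
  have hScoe : ((W - c • M W : Sym2Mat) : Matrix (Fin 2) (Fin 2) ℝ) = Z0 + α • Qmat := by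
    have h1 : ((1 : Sym2Mat →L[ℝ] Sym2Mat) - c • M) W = W - c • M W := rfl
    rw [hZ0def, ← h1]
    simp
  -- the matrix G and the constant δ
  set w0 : ℝ := 1 - η * l + β with hw0
  clear_value w0
  set D : ℝ := 2 + c * (w0 ^ 2 + (1 - w0) ^ 2) with hD
  clear_value D
  set δ : ℝ := α * c / D with hδ
  clear_value δ
  obtain ⟨hδ0, hGδ⟩ := Gfact α c w0 δ D hα hc hD hδ
  set Gm : Matrix (Fin 2) (Fin 2) ℝ :=
    α • Qmat + (α * c) • !![w0*w0, w0*(1-w0); w0*(1-w0), (1-w0)*(1-w0)] with hGm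
  clear_value Gm
  -- the strictly feasible element V = W + cM(W)
  set V : Sym2Mat := W + c • M W with hV
  have hkey : V - c • M V = (W - c • M W) + c • M (W - c • M W) := by
    rw [hV]
    simp only [map_add, map_sub, _root_.map_smul, smul_sub, smul_add]
    abel
  have hMS' : ((M (W - c • M W) : Sym2Mat) : Matrix (Fin 2) (Fin 2) ℝ)
      = Amat η β l * (Z0 + α • Qmat) * (Amat η β l)ᵀ
        + (η ^ 2 * l ^ 2 * ((Z0 + α • Qmat) 0 0)) • Qmat := by
    rw [hM, hScoe]
  have hcoe2 : ((V - c • M V : Sym2Mat) : Matrix (Fin 2) (Fin 2) ℝ)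
      = (Z0 + α • Qmat) + c • (Amat η β l * (Z0 + α • Qmat) * (Amat η β l)ᵀ
        + (η ^ 2 * l ^ 2 * ((Z0 + α • Qmat) 0 0)) • Qmat) := by
    rw [hkey, Submodule.coe_add, Submodule.coe_smul, hScoe, hMS']
  have hAQ : Amat η β l * Qmat * (Amat η β l)ᵀ
      = !![w0*w0, w0*(1-w0); w0*(1-w0), (1-w0)*(1-w0)] := by
    rw [hw0]
    ext i j
    fin_cases i <;> fin_cases j <;>
      simp only [Amat, Qmat, Matrix.mul_apply, Fin.sum_univ_two, Matrix.transpose_apply,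
        Matrix.of_apply, Matrix.cons_val', Matrix.cons_val_zero, Matrix.cons_val_one,
        Matrix.head_cons, Matrix.empty_val', Matrix.cons_val_fin_one, Matrix.head_fin_const,
        Fin.zero_eta, Fin.mk_one] <;> ring
  have hentry : (Z0 + α • Qmat) 0 0 = Z0 0 0 + α := by
    simp [Qmat, Matrix.add_apply]
  have hdist : Amat η β l * (Z0 + α • Qmat) * (Amat η β l)ᵀ
      = Amat η β l * Z0 * (Amat η β l)ᵀ + α • (Amat η β l * Qmat * (Amat η β l)ᵀ) := by
    rw [Matrix.mul_add, Matrix.add_mul, Matrix.mul_smul, Matrix.smul_mul]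
  clear_value Z0 V
  have hsplit : ((V - c • M V : Sym2Mat) : Matrix (Fin 2) (Fin 2) ℝ) - Gm
      = Z0 + c • (Amat η β l * Z0 * (Amat η β l)ᵀ)
        + (c * (η ^ 2 * l ^ 2) * (Z0 0 0 + α)) • Qmat := by
    rw [hcoe2, hentry, hdist, hAQ, hGm]
    module
  have hqfT1 : qf (((V - c • M V : Sym2Mat) : Matrix (Fin 2) (Fin 2) ℝ) - Gm) := by
    rw [hsplit]
    refine qf_add (qf_add hqfZ0 (qf_smul (qf_conj η β l hqfZ0) hc.le)) (qf_smul qf_Q ?_)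
    have h1 := qf00 hqfZ0
    have h2 : (0:ℝ) ≤ η ^ 2 * l ^ 2 := by positivity
    exact mul_nonneg (mul_nonneg hc.le h2) (by linarith)
  have hqfT2 : qf (((V - c • M V : Sym2Mat) : Matrix (Fin 2) (Fin 2) ℝ)
      - δ • (1 : Matrix (Fin 2) (Fin 2) ℝ)) := by
    have e : ((V - c • M V : Sym2Mat) : Matrix (Fin 2) (Fin 2) ℝ)
        - δ • (1 : Matrix (Fin 2) (Fin 2) ℝ)
        = (((V - c • M V : Sym2Mat) : Matrix (Fin 2) (Fin 2) ℝ) - Gm)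
          + (Gm - δ • (1 : Matrix (Fin 2) (Fin 2) ℝ)) := by
      rw [sub_add_sub_cancel]
    rw [e]
    exact qf_add hqfT1 hGδ
  have hpushV : ((V - c • M V : Sym2Mat) : Matrix (Fin 2) (Fin 2) ℝ)
      = (V : Matrix (Fin 2) (Fin 2) ℝ) - c • ((M V : Sym2Mat) : Matrix (Fin 2) (Fin 2) ℝ) := rfl
  have hqfV : qf (V : Matrix (Fin 2) (Fin 2) ℝ) := by
    rw [hV]
    push_cast
    exact qf_add hqfW (qf_smul (Mpres W hqfW) hc.le)
  have hqfMV : qf ((M V : Sym2Mat) : Matrix (Fin 2) (Fin 2) ℝ) := Mpres V hqfV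
  have hqfVδ : qf ((V : Matrix (Fin 2) (Fin 2) ℝ) - δ • (1 : Matrix (Fin 2) (Fin 2) ℝ)) := by
    have e : (V : Matrix (Fin 2) (Fin 2) ℝ) - δ • (1 : Matrix (Fin 2) (Fin 2) ℝ)
        = (((V - c • M V : Sym2Mat) : Matrix (Fin 2) (Fin 2) ℝ)
            - δ • (1 : Matrix (Fin 2) (Fin 2) ℝ))
          + c • ((M V : Sym2Mat) : Matrix (Fin 2) (Fin 2) ℝ) := by
      rw [hpushV]; abel
    rw [e]
    exact qf_add hqfT2 (qf_smul hqfMV hc.le)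
  -- the trace of V and the contraction factor r
  set τ : ℝ := (V : Matrix (Fin 2) (Fin 2) ℝ) 0 0 + (V : Matrix (Fin 2) (Fin 2) ℝ) 1 1 with hτ
  clear_value τ
  have hV00 : δ ≤ (V : Matrix (Fin 2) (Fin 2) ℝ) 0 0 := by
    have := qf00 hqfVδ
    simp only [Matrix.sub_apply, Matrix.smul_apply, Matrix.one_apply_eq, smul_eq_mul,
      mul_one] at this
    linarith
  have hV11 : δ ≤ (V : Matrix (Fin 2) (Fin 2) ℝ) 1 1 := by
    have := qf11 hqfVδ
    simp only [Matrix.sub_apply, Matrix.smul_apply, Matrix.one_apply_eq, smul_eq_mul,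
      mul_one] at this
    linarith
  have hτ0 : 0 < τ := by rw [hτ]; linarith
  have hsymV : (V : Matrix (Fin 2) (Fin 2) ℝ) 1 0 = (V : Matrix (Fin 2) (Fin 2) ℝ) 0 1 := by
    have h2 := V.2
    have := congrFun (congrFun h2 0) 1
    simpa [Matrix.transpose_apply] using this
  have hqfτV : qf (τ • (1 : Matrix (Fin 2) (Fin 2) ℝ) - (V : Matrix (Fin 2) (Fin 2) ℝ)) := by
    intro x y
    have h := hqfV y (-x)
    simp only [Matrix.sub_apply, Matrix.smul_apply, Matrix.one_apply, smul_eq_mul]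
    norm_num
    rw [hτ]
    nlinarith [h, hsymV]
  set r : ℝ := 1 - δ / τ with hr
  clear_value r
  have hr0 : 0 ≤ r := by
    rw [hr]
    have : δ / τ ≤ 1 := by
      rw [div_le_one hτ0]; rw [hτ]; linarith
    linarith
  have hr1 : r < 1 := by
    rw [hr]
    have : 0 < δ / τ := div_pos hδ0 hτ0
    linarith
  -- the one-step contraction
  have hqfrV : qf (r • (V : Matrix (Fin 2) (Fin 2) ℝ)
      - c • ((M V : Sym2Mat) : Matrix (Fin 2) (Fin 2) ℝ)) := by
    have e : r • (V : Matrix (Fin 2) (Fin 2) ℝ)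
        - c • ((M V : Sym2Mat) : Matrix (Fin 2) (Fin 2) ℝ)
        = (((V - c • M V : Sym2Mat) : Matrix (Fin 2) (Fin 2) ℝ)
            - δ • (1 : Matrix (Fin 2) (Fin 2) ℝ))
          + (δ / τ) • (τ • (1 : Matrix (Fin 2) (Fin 2) ℝ) - (V : Matrix (Fin 2) (Fin 2) ℝ)) := by
      rw [hpushV, hr]
      ext i j
      simp only [Matrix.sub_apply, Matrix.add_apply, Matrix.smul_apply, smul_eq_mul]
      field_simp
      ring
    rw [e]
    exact qf_add hqfT2 (qf_smul hqfτV (div_nonneg hδ0.le hτ0.le))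
  -- iteration: (cM)^n V ⪯ r^n V
  have hiter : ∀ n : ℕ, qf (r ^ n • (V : Matrix (Fin 2) (Fin 2) ℝ)
      - ((((c • M) ^ n) V : Sym2Mat) : Matrix (Fin 2) (Fin 2) ℝ)) := by
    intro n
    induction n with
    | zero => intro x y; simp
    | succ n ih =>
      have hmem : qf (((r ^ n • V - ((c • M) ^ n) V : Sym2Mat)
          : Matrix (Fin 2) (Fin 2) ℝ)) := by
        exact ih
      have h1 := Npres _ hmem
      have e : r ^ (n+1) • (V : Matrix (Fin 2) (Fin 2) ℝ)
          - ((((c • M) ^ (n+1)) V : Sym2Mat) : Matrix (Fin 2) (Fin 2) ℝ)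
          = r ^ n • (r • (V : Matrix (Fin 2) (Fin 2) ℝ)
              - c • ((M V : Sym2Mat) : Matrix (Fin 2) (Fin 2) ℝ))
            + (((c • M) (r ^ n • V - ((c • M) ^ n) V) : Sym2Mat)
                : Matrix (Fin 2) (Fin 2) ℝ) := by
        have hp : (((c • M) ^ (n+1)) V : Sym2Mat)
            = (c • M) ((((c • M) ^ n)) V) := by
          rw [pow_succ', ContinuousLinearMap.mul_apply]
        have hq : ((c • M) (r ^ n • V - ((c • M) ^ n) V) : Sym2Mat)
            = r ^ n • (c • M V) - (c • M) (((c • M) ^ n) V) := by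
          rw [map_sub, _root_.map_smul]
          rfl
        rw [hp, hq]
        push_cast
        ext i j
        simp only [Matrix.sub_apply, Matrix.add_apply, Matrix.smul_apply, smul_eq_mul]
        ring
      rw [e]
      exact qf_add (qf_smul hqfrV (pow_nonneg hr0 n)) h1
  -- norm bound for arbitrary X
  have hbnd : ∀ (n : ℕ) (X : Sym2Mat),
      ‖(((c • M) ^ n) X : Sym2Mat)‖ ≤ (2 * τ / δ) * r ^ n * ‖X‖ := by
    intro n X
    set t : ℝ := 2 * ‖(X : Matrix (Fin 2) (Fin 2) ℝ)‖ / δ with ht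
    have ht0 : 0 ≤ t := by positivity
    have hqfP : qf (t • (V : Matrix (Fin 2) (Fin 2) ℝ) - (X : Matrix (Fin 2) (Fin 2) ℝ)) := by
      have e : t • (V : Matrix (Fin 2) (Fin 2) ℝ) - (X : Matrix (Fin 2) (Fin 2) ℝ)
          = t • ((V : Matrix (Fin 2) (Fin 2) ℝ) - δ • (1 : Matrix (Fin 2) (Fin 2) ℝ))
            + ((2 * ‖(X : Matrix (Fin 2) (Fin 2) ℝ)‖) • (1 : Matrix (Fin 2) (Fin 2) ℝ)
              - (X : Matrix (Fin 2) (Fin 2) ℝ)) := by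
        rw [ht]
        ext i j
        simp only [Matrix.sub_apply, Matrix.add_apply, Matrix.smul_apply, smul_eq_mul]
        field_simp [hδ0.ne']
        ring
      rw [e]
      exact qf_add (qf_smul hqfVδ ht0) qf_two_norm
    have hqfQ2 : qf (t • (V : Matrix (Fin 2) (Fin 2) ℝ) + (X : Matrix (Fin 2) (Fin 2) ℝ)) := by
      have e : t • (V : Matrix (Fin 2) (Fin 2) ℝ) + (X : Matrix (Fin 2) (Fin 2) ℝ)
          = t • ((V : Matrix (Fin 2) (Fin 2) ℝ) - δ • (1 : Matrix (Fin 2) (Fin 2) ℝ))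
            + ((2 * ‖(-(X : Matrix (Fin 2) (Fin 2) ℝ))‖) • (1 : Matrix (Fin 2) (Fin 2) ℝ)
              - (-(X : Matrix (Fin 2) (Fin 2) ℝ))) := by
        rw [ht, norm_neg]
        ext i j
        simp only [Matrix.sub_apply, Matrix.add_apply, Matrix.smul_apply, Matrix.neg_apply,
          smul_eq_mul]
        field_simp [hδ0.ne']
        ring
      rw [e]
      exact qf_add (qf_smul hqfVδ ht0) qf_two_norm
    -- apply (cM)^n and the iteration bound
    have hqfPn : qf ((t * r ^ n) • (V : Matrix (Fin 2) (Fin 2) ℝ)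
        - ((((c • M) ^ n) X : Sym2Mat) : Matrix (Fin 2) (Fin 2) ℝ)) := by
      have hmem : qf (((t • V - X : Sym2Mat) : Matrix (Fin 2) (Fin 2) ℝ)) := by
        push_cast; exact hqfP
      have h1 := NpowPres n _ hmem
      have hq : (((c • M) ^ n) (t • V - X) : Sym2Mat)
          = t • (((c • M) ^ n) V) - (((c • M) ^ n) X) := by
        rw [map_sub, _root_.map_smul]
      rw [hq] at h1
      have e : (t * r ^ n) • (V : Matrix (Fin 2) (Fin 2) ℝ)
          - ((((c • M) ^ n) X : Sym2Mat) : Matrix (Fin 2) (Fin 2) ℝ)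
          = t • (r ^ n • (V : Matrix (Fin 2) (Fin 2) ℝ)
              - ((((c • M) ^ n) V : Sym2Mat) : Matrix (Fin 2) (Fin 2) ℝ))
            + ((t • (((c • M) ^ n) V) - (((c • M) ^ n) X) : Sym2Mat)
                : Matrix (Fin 2) (Fin 2) ℝ) := by
        push_cast
        ext i j
        simp only [Matrix.sub_apply, Matrix.add_apply, Matrix.smul_apply, smul_eq_mul]
        ring
      rw [e]
      exact qf_add (qf_smul (hiter n) ht0) h1
    have hqfQn : qf ((t * r ^ n) • (V : Matrix (Fin 2) (Fin 2) ℝ)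
        + ((((c • M) ^ n) X : Sym2Mat) : Matrix (Fin 2) (Fin 2) ℝ)) := by
      have hmem : qf (((t • V + X : Sym2Mat) : Matrix (Fin 2) (Fin 2) ℝ)) := by
        push_cast; exact hqfQ2
      have h1 := NpowPres n _ hmem
      have hq : (((c • M) ^ n) (t • V + X) : Sym2Mat)
          = t • (((c • M) ^ n) V) + (((c • M) ^ n) X) := by
        rw [map_add, _root_.map_smul]
      rw [hq] at h1
      have e : (t * r ^ n) • (V : Matrix (Fin 2) (Fin 2) ℝ)
          + ((((c • M) ^ n) X : Sym2Mat) : Matrix (Fin 2) (Fin 2) ℝ)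
          = t • (r ^ n • (V : Matrix (Fin 2) (Fin 2) ℝ)
              - ((((c • M) ^ n) V : Sym2Mat) : Matrix (Fin 2) (Fin 2) ℝ))
            + ((t • (((c • M) ^ n) V) + (((c • M) ^ n) X) : Sym2Mat)
                : Matrix (Fin 2) (Fin 2) ℝ) := by
        push_cast
        ext i j
        simp only [Matrix.sub_apply, Matrix.add_apply, Matrix.smul_apply, smul_eq_mul]
        ring
      rw [e]
      exact qf_add (qf_smul (hiter n) ht0) h1
    have hsymn : ((((c • M) ^ n) X : Sym2Mat) : Matrix (Fin 2) (Fin 2) ℝ) 1 0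
        = ((((c • M) ^ n) X : Sym2Mat) : Matrix (Fin 2) (Fin 2) ℝ) 0 1 := by
      have h2 := (((c • M) ^ n) X).2
      have := congrFun (congrFun h2 0) 1
      simpa [Matrix.transpose_apply] using this
    have hb := norm_le_of_qf hsymn hqfPn hqfQn
    have hPentry : ((t * r ^ n) • (V : Matrix (Fin 2) (Fin 2) ℝ)) 0 0
        + ((t * r ^ n) • (V : Matrix (Fin 2) (Fin 2) ℝ)) 1 1
        = (2 * τ / δ) * r ^ n * ‖(X : Matrix (Fin 2) (Fin 2) ℝ)‖ := by
      simp only [Matrix.smul_apply, smul_eq_mul, ht]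
      rw [hτ]
      field_simp [hδ0.ne']
    calc ‖(((c • M) ^ n) X : Sym2Mat)‖
        = ‖((((c • M) ^ n) X : Sym2Mat) : Matrix (Fin 2) (Fin 2) ℝ)‖ := rfl
      _ ≤ _ := hb
      _ = (2 * τ / δ) * r ^ n * ‖(X : Matrix (Fin 2) (Fin 2) ℝ)‖ := hPentry
      _ = (2 * τ / δ) * r ^ n * ‖X‖ := rfl
  -- operator norm bound
  have hopn : ∀ n : ℕ, ‖(c • M) ^ n‖ ≤ (2 * τ / δ) * r ^ n := by
    intro n
    apply ContinuousLinearMap.opNorm_le_bound _ (by positivity)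
    intro X
    exact hbnd n X
  -- conclude ρ ≤ r < 1, contradiction
  set C : ℝ := 2 * τ / δ with hCdef
  clear_value C
  have hC0 : 0 < C := by rw [hCdef]; positivity
  have hlim : Filter.Tendsto (fun n : ℕ => C ^ ((n : ℝ)⁻¹) * r) Filter.atTop (nhds r) := by
    have h0 : Filter.Tendsto (fun n : ℕ => ((n : ℝ))⁻¹) Filter.atTop (nhds 0) :=
      tendsto_inv_atTop_nhds_zero_nat
    have h1 : Filter.Tendsto (fun n : ℕ => C ^ ((n : ℝ)⁻¹)) Filter.atTop (nhds 1) := by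
      have h2 := (Real.continuousAt_const_rpow (a := C) (b := 0) hC0.ne').tendsto.comp h0
      simpa [Real.rpow_zero, Function.comp_def] using h2
    simpa using h1.mul tendsto_const_nhds
  have hev : ∀ᶠ n : ℕ in Filter.atTop,
      ‖(c • M) ^ n‖ ^ ((n : ℝ)⁻¹) ≤ C ^ ((n : ℝ)⁻¹) * r := by
    rw [Filter.eventually_atTop]
    refine ⟨1, fun n hn => ?_⟩
    have hn0 : (n : ℝ) ≠ 0 := Nat.cast_ne_zero.2 (Nat.one_le_iff_ne_zero.1 hn)
    have hstep : ‖(c • M) ^ n‖ ^ ((n : ℝ)⁻¹) ≤ (C * r ^ n) ^ ((n : ℝ)⁻¹) :=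
      Real.rpow_le_rpow (ContinuousLinearMap.opNorm_nonneg _) (hopn n) (by positivity)
    have heq : (C * r ^ n) ^ ((n : ℝ)⁻¹) = C ^ ((n : ℝ)⁻¹) * r := by
      rw [Real.mul_rpow hC0.le (pow_nonneg hr0 n)]
      congr 1
      rw [← Real.rpow_natCast r n, ← Real.rpow_mul hr0]
      rw [mul_inv_cancel₀ hn0, Real.rpow_one]
    rw [heq] at hstep
    exact hstep
  have hρr : ρ ≤ r := le_of_tendsto_of_tendsto hρ hlim hev
  linarith
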